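/- Let (E, F) be a downward-closed set system (F ⊆ powerset(E), S ∈ F and T ⊆ S implies T ∈ F) that is a p-system: for every X ⊆ E with ur(X) ≠ 0, lr(X)/ur(X) ≥ p, where lr(X) and ur(X) are the minimum and maximum cardinalities of maximal-in-X members of F. Order E as e_1, …, e_n, let E_j = {e_1,…,e_j}, and suppose weights satisfy w(e_1) ≥ w(e_2) ≥ … ≥ w(e_n) ≥ 0. If G ∈ F is such that G ∩ E_j is a maximal feasible subset of E_j for every j, then w(G) ≥ p · w(OPT), where OPT is a maximum-weight member of F. -/

import Mathlib

open Finset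

/-- `T` is a maximal feasible subset of `X` in the set system `F`. -/
def MaxIn {E : Type*} [DecidableEq E] (F : Finset (Finset E)) (X T : Finset E) : Prop :=
  T ∈ F ∧ T ⊆ X ∧ ∀ e ∈ X, e ∉ T → insert e T ∉ F

/-- Lower rank of `X`: minimum cardinality of a maximal-in-`X` member of `F`. -/
noncomputable def lowerRank {E : Type*} [DecidableEq E] (F : Finset (Finset E))
    (X : Finset E) : ℕ :=
  sInf {k : ℕ | ∃ T : Finset E, MaxIn F X T ∧ T.card = k}

/-- Upper rank of `X`: maximum cardinality of a maximal-in-`X` member of `F`. -/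
noncomputable def upperRank {E : Type*} [DecidableEq E] (F : Finset (Finset E))
    (X : Finset E) : ℕ :=
  sSup {k : ℕ | ∃ T : Finset E, MaxIn F X T ∧ T.card = k}

/-- Any feasible subset of `X` extends to a maximal feasible subset of `X`. -/
lemma exists_maxIn_ext {E : Type*} [DecidableEq E] {F : Finset (Finset E)}
    {X S : Finset E} (hS : S ∈ F) (hSX : S ⊆ X) :
    ∃ T, MaxIn F X T ∧ S ⊆ T := by
  classical
  have hne : (F.filter (fun T => T ⊆ X ∧ S ⊆ T)).Nonempty :=
    ⟨S, by simp [hS, hSX]⟩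
  obtain ⟨T, hT, hmax⟩ := Finset.exists_maximal hne
  simp only [mem_filter] at hT
  refine ⟨T, ⟨hT.1, hT.2.1, ?_⟩, hT.2.2⟩
  intro x hx hxT hins
  refine hxT (hmax ?_ (Finset.subset_insert x T) (Finset.mem_insert_self x T))
  simp only [mem_filter]
  exact ⟨hins, Finset.insert_subset hx hT.2.1,
    hT.2.2.trans (Finset.subset_insert x T)⟩

lemma rankSet_bddAbove {E : Type*} [DecidableEq E] (F : Finset (Finset E)) (X : Finset E) :
    BddAbove {k : ℕ | ∃ T : Finset E, MaxIn F X T ∧ T.card = k} := by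
  refine ⟨X.card, ?_⟩
  rintro k ⟨T, hT, rfl⟩
  exact Finset.card_le_card hT.2.1

lemma card_le_upperRank {E : Type*} [DecidableEq E] {F : Finset (Finset E)}
    {X S : Finset E} (hS : S ∈ F) (hSX : S ⊆ X) : S.card ≤ upperRank F X := by
  obtain ⟨T, hT, hST⟩ := exists_maxIn_ext hS hSX
  exact (Finset.card_le_card hST).trans
    (le_csSup (rankSet_bddAbove F X) ⟨T, hT, rfl⟩)

lemma lowerRank_le_card {E : Type*} [DecidableEq E] {F : Finset (Finset E)}
    {X T : Finset E} (hT : MaxIn F X T) : lowerRank F X ≤ T.card :=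
  Nat.sInf_le ⟨T, hT, rfl⟩

/-- Hausmann–Korte approximation guarantee for greedy-type algorithms on p-systems:
if `G ∈ F` is maximal on every weight-ordered prefix `E_j`, then its weight is at
least `p` times the weight of an optimal member of `F`. -/
theorem stmt7 {E : Type*} [Fintype E] [DecidableEq E]
    (F : Finset (Finset E)) (hdc : ∀ S ∈ F, ∀ T ⊆ S, T ∈ F)
    (p : ℝ)
    (hps : ∀ X : Finset E, upperRank F X ≠ 0 →
      p ≤ (lowerRank F X : ℝ) / (upperRank F X : ℝ))
    (n : ℕ) (e : Fin n ≃ E) (w : E → ℝ)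
    (hw0 : ∀ x : E, 0 ≤ w x)
    (hwmono : ∀ i j : Fin n, i ≤ j → w (e j) ≤ w (e i))
    (G : Finset E) (hG : G ∈ F)
    (hGmax : ∀ j : ℕ, MaxIn F (univ.filter (fun x : E => (e.symm x : ℕ) < j))
      (G ∩ univ.filter (fun x : E => (e.symm x : ℕ) < j)))
    (OPT : Finset E) (hOPT : OPT ∈ F)
    (hOPTmax : ∀ S ∈ F, ∑ x ∈ S, w x ≤ ∑ x ∈ OPT, w x) :
    p * ∑ x ∈ OPT, w x ≤ ∑ x ∈ G, w x := by
  classical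
  set v : ℕ → ℝ := fun j => if h : j < n then w (e ⟨j, h⟩) else 0 with hv
  have hvnn : ∀ j, 0 ≤ v j := by
    intro j; simp only [hv]; split <;> simp [hw0]
  have hvanti : ∀ j, v (j + 1) ≤ v j := by
    intro j
    simp only [hv]
    by_cases h1 : j + 1 < n
    · have h0 : j < n := Nat.lt_of_succ_lt h1
      rw [dif_pos h1, dif_pos h0]
      exact hwmono ⟨j, h0⟩ ⟨j + 1, h1⟩ (by simp)
    · rw [dif_neg h1]
      split <;> simp [hw0]
  set d : ℕ → ℝ := fun j => v j - v (j + 1) with hd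
  have hdnn : ∀ j, 0 ≤ d j := fun j => sub_nonneg.mpr (hvanti j)
  -- telescoping: for i ≤ n, ∑_{j ∈ Ico i n} d j = v i
  have htel : ∀ i : ℕ, i < n → ∑ j ∈ Finset.Ico i n, d j = v i := by
    intro i hi
    have h1 : ∑ j ∈ Finset.range n, d j = v 0 - v n := Finset.sum_range_sub' v n
    have h2 : ∑ j ∈ Finset.range i, d j = v 0 - v i := Finset.sum_range_sub' v i
    have h3 : ∑ j ∈ Finset.Ico i n, d j
        = ∑ j ∈ Finset.range n, d j - ∑ j ∈ Finset.range i, d j := by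
      rw [Finset.sum_Ico_eq_sub _ hi.le]
    have hvn : v n = 0 := by simp [hv]
    rw [h3, h1, h2, hvn]; ring
  -- Abel decomposition of any weight sum
  have habel : ∀ S : Finset E, ∑ x ∈ S, w x
      = ∑ j ∈ Finset.range n,
          d j * ((S.filter (fun x => (e.symm x : ℕ) < j + 1)).card : ℝ) := by
    intro S
    have hstep : ∀ x : E, w x = ∑ j ∈ Finset.range n,
        (if (e.symm x : ℕ) < j + 1 then d j else 0) := by
      intro x
      have hx : (e.symm x : ℕ) < n := (e.symm x).2
      have : w x = v (e.symm x) := by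
        simp only [hv, dif_pos hx, Fin.eta, e.apply_symm_apply]
      rw [this, ← htel _ hx]
      rw [← Finset.sum_filter]
      congr 1
      ext j
      simp [Nat.lt_succ_iff, and_comm]
    calc ∑ x ∈ S, w x
        = ∑ x ∈ S, ∑ j ∈ Finset.range n,
            (if (e.symm x : ℕ) < j + 1 then d j else 0) := by
          exact Finset.sum_congr rfl fun x _ => hstep x
      _ = ∑ j ∈ Finset.range n, ∑ x ∈ S,
            (if (e.symm x : ℕ) < j + 1 then d j else 0) := Finset.sum_comm
      _ = ∑ j ∈ Finset.range n,
            d j * ((S.filter (fun x => (e.symm x : ℕ) < j + 1)).card : ℝ) := by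
          refine Finset.sum_congr rfl fun j _ => ?_
          rw [← Finset.sum_filter, Finset.sum_const, nsmul_eq_mul, mul_comm]
  -- inter with prefix = filter
  have hinter : ∀ (S : Finset E) (j : ℕ),
      S ∩ univ.filter (fun x : E => (e.symm x : ℕ) < j)
        = S.filter (fun x => (e.symm x : ℕ) < j) := by
    intro S j; ext x; simp
  -- key per-prefix inequality
  have hkey : ∀ j : ℕ,
      p * ((OPT.filter (fun x => (e.symm x : ℕ) < j)).card : ℝ)
        ≤ ((G.filter (fun x => (e.symm x : ℕ) < j)).card : ℝ) := by
    intro j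
    set X : Finset E := univ.filter (fun x : E => (e.symm x : ℕ) < j) with hX
    have hGj := hGmax j
    rw [hinter G j] at hGj
    have hGcard : (lowerRank F X : ℝ) ≤ ((G.filter (fun x => (e.symm x : ℕ) < j)).card : ℝ) := by
      exact_mod_cast lowerRank_le_card hGj
    have hOj : OPT.filter (fun x => (e.symm x : ℕ) < j) ∈ F :=
      hdc OPT hOPT _ (Finset.filter_subset _ _)
    have hOsub : OPT.filter (fun x => (e.symm x : ℕ) < j) ⊆ X := by
      intro x hx; simp only [hX, mem_filter, mem_univ, true_and]
      exact (Finset.mem_filter.mp hx).2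
    have hOcard : (OPT.filter (fun x => (e.symm x : ℕ) < j)).card ≤ upperRank F X :=
      card_le_upperRank hOj hOsub
    rcases le_or_gt p 0 with hp | hp
    · have : p * ((OPT.filter (fun x => (e.symm x : ℕ) < j)).card : ℝ) ≤ 0 :=
        mul_nonpos_of_nonpos_of_nonneg hp (by positivity)
      exact this.trans (by positivity)
    · by_cases hur : upperRank F X = 0
      · have h0 : (OPT.filter (fun x => (e.symm x : ℕ) < j)).card = 0 := by omega
        rw [h0]
        simp
      · have hps' := hps X hur
        have hurpos : (0 : ℝ) < (upperRank F X : ℝ) := by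
          exact_mod_cast Nat.pos_of_ne_zero hur
        have h1 : p * (upperRank F X : ℝ) ≤ (lowerRank F X : ℝ) := by
          rw [div_eq_mul_inv] at hps'
          calc p * (upperRank F X : ℝ)
              ≤ ((lowerRank F X : ℝ) * (upperRank F X : ℝ)⁻¹) * (upperRank F X : ℝ) :=
                mul_le_mul_of_nonneg_right hps' hurpos.le
            _ = (lowerRank F X : ℝ) := by field_simp
        calc p * ((OPT.filter (fun x => (e.symm x : ℕ) < j)).card : ℝ)
            ≤ p * (upperRank F X : ℝ) :=
              mul_le_mul_of_nonneg_left (by exact_mod_cast hOcard) hp.le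
          _ ≤ (lowerRank F X : ℝ) := h1
          _ ≤ _ := hGcard
  -- assemble
  rw [habel OPT, habel G, Finset.mul_sum]
  refine Finset.sum_le_sum fun j _ => ?_
  have := hkey (j + 1)
  calc p * (d j * ((OPT.filter (fun x => (e.symm x : ℕ) < j + 1)).card : ℝ))
      = d j * (p * ((OPT.filter (fun x => (e.symm x : ℕ) < j + 1)).card : ℝ)) := by ring
    _ ≤ d j * ((G.filter (fun x => (e.symm x : ℕ) < j + 1)).card : ℝ) :=
        mul_le_mul_of_nonneg_left this (hdnn j)
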